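/- Let (X, d_X) and (Y, d_Y) be non-Archimedean metric spaces. Then ρ_u is a non-Archimedean metric on the set of all maps f : X → Y; that is, ρ_u(f, g) ≥ 0 with equality iff f = g, ρ_u(f, g) = ρ_u(g, f), and ρ_u(f, g) ≤ max{ρ_u(f, h), ρ_u(h, g)} for all maps f, g, h : X → Y. -/

import Mathlib

open scoped ENNReal

/-- The graph of a map `f : X → Y`, as a subset of `X × Y`. -/
def graphOf {X Y : Type*} (f : X → Y) : Set (X × Y) :=
  Set.range fun x => (x, f x)

/-- `ρ_H(f,g)`: the Hausdorff distance between the graphs of `f` and `g` in the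
product `X × Y` equipped with the sup-metric (which is the product metric in Mathlib). -/
noncomputable def rhoH {X Y : Type*} [MetricSpace X] [MetricSpace Y] (f g : X → Y) : ℝ≥0∞ :=
  EMetric.hausdorffEdist (graphOf f) (graphOf g)

/-- `ρ_s(f,g) = sup_x d_Y(f x, g x)`. -/
noncomputable def rhoS {X Y : Type*} [MetricSpace X] [MetricSpace Y] (f g : X → Y) : ℝ≥0∞ :=
  ⨆ x : X, edist (f x) (g x)

-- `ρ_u(f,g)`: zero if `f = g`; otherwise the infimum of those `ε > 0` for which there
-- exists `δ > 0` with `sup_{x' ∈ B_x(δ)} d_Y(f x, g x') ≤ ε` and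
-- `sup_{x' ∈ B_x(δ)} d_Y(g x, f x') ≤ ε` for all `x ∈ X` (`∞` if there is no such `ε`).
open Classical in
noncomputable def rhoU {X Y : Type*} [MetricSpace X] [MetricSpace Y] (f g : X → Y) : ℝ≥0∞ :=
  if f = g then 0 else
    sInf {ε : ℝ≥0∞ | 0 < ε ∧ ∃ δ : ℝ≥0∞, 0 < δ ∧ ∀ x x' : X, edist x x' < δ →
      edist (f x) (g x') ≤ ε ∧ edist (g x) (f x') ≤ ε}

theorem stmt_12 {X Y : Type*} [MetricSpace X] [MetricSpace Y]
    (hnaX : ∀ x y z : X, dist x z ≤ max (dist x y) (dist y z))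
    (hnaY : ∀ x y z : Y, dist x z ≤ max (dist x y) (dist y z)) :
    (∀ f g : X → Y, 0 ≤ rhoU f g) ∧
    (∀ f g : X → Y, (rhoU f g = 0 ↔ f = g)) ∧
    (∀ f g : X → Y, rhoU f g = rhoU g f) ∧
    (∀ f g h : X → Y, rhoU f g ≤ max (rhoU f h) (rhoU h g)) := by
  have naY : ∀ a b c : Y, edist a c ≤ max (edist a b) (edist b c) := by
    intro a b c
    rw [edist_dist, edist_dist, edist_dist]
    rcases le_total (dist a b) (dist b c) with hle | hle
    · refine le_trans (ENNReal.ofReal_le_ofReal (hnaY a b c)) ?_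
      rw [max_eq_right hle]
      exact le_max_right _ _
    · refine le_trans (ENNReal.ofReal_le_ofReal (hnaY a b c)) ?_
      rw [max_eq_left hle]
      exact le_max_left _ _
  refine ⟨fun f g => zero_le, ?_, ?_, ?_⟩
  · intro f g
    constructor
    · intro h0
      by_contra hne
      rw [rhoU, if_neg hne] at h0
      obtain ⟨x0, hx0⟩ := Function.ne_iff.mp hne
      have hc : (0 : ℝ≥0∞) < edist (f x0) (g x0) := by
        simpa [edist_pos] using hx0
      have hle : edist (f x0) (g x0) ≤
          sInf {ε : ℝ≥0∞ | 0 < ε ∧ ∃ δ : ℝ≥0∞, 0 < δ ∧ ∀ x x' : X, edist x x' < δ →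
            edist (f x) (g x') ≤ ε ∧ edist (g x) (f x') ≤ ε} := by
        refine le_sInf fun ε hε => ?_
        obtain ⟨hεpos, δ, hδ, H⟩ := hε
        exact (H x0 x0 (by simpa using hδ)).1
      rw [h0] at hle
      exact hc.not_ge hle
    · rintro rfl
      simp [rhoU]
  · intro f g
    by_cases hfg : f = g
    · simp [rhoU, hfg]
    · rw [rhoU, rhoU, if_neg hfg, if_neg (Ne.symm hfg)]
      congr 1
      ext ε
      constructor
      · rintro ⟨hε, δ, hδ, H⟩
        exact ⟨hε, δ, hδ, fun x x' hx => ⟨(H x x' hx).2, (H x x' hx).1⟩⟩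
      · rintro ⟨hε, δ, hδ, H⟩
        exact ⟨hε, δ, hδ, fun x x' hx => ⟨(H x x' hx).2, (H x x' hx).1⟩⟩
  · intro f g h
    by_cases hfg : f = g
    · rw [rhoU, if_pos hfg]; exact zero_le
    by_cases hfh : f = h
    · subst hfh; exact le_max_right _ _
    by_cases hhg : h = g
    · subst hhg; exact le_max_left _ _
    rw [rhoU, rhoU, rhoU, if_neg hfg, if_neg hfh, if_neg hhg]
    by_contra hlt
    push_neg at hlt
    obtain ⟨ε1, hε1S, hε1⟩ := sInf_lt_iff.mp (lt_of_le_of_lt (le_max_left _ _) hlt)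
    obtain ⟨ε2, hε2S, hε2⟩ := sInf_lt_iff.mp (lt_of_le_of_lt (le_max_right _ _) hlt)
    obtain ⟨hε1pos, δ1, hδ1, H1⟩ := hε1S
    obtain ⟨hε2pos, δ2, hδ2, H2⟩ := hε2S
    have hmem : max ε1 ε2 ∈ {ε : ℝ≥0∞ | 0 < ε ∧ ∃ δ : ℝ≥0∞, 0 < δ ∧ ∀ x x' : X,
        edist x x' < δ → edist (f x) (g x') ≤ ε ∧ edist (g x) (f x') ≤ ε} := by
      refine ⟨lt_of_lt_of_le hε1pos (le_max_left _ _), min δ1 δ2, lt_min hδ1 hδ2,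
        fun x x' hx => ?_⟩
      have hx1 : edist x x' < δ1 := lt_of_lt_of_le hx (min_le_left _ _)
      constructor
      · refine le_trans (naY (f x) (h x') (g x')) ?_
        exact max_le (le_trans (H1 x x' hx1).1 (le_max_left _ _))
          (le_trans (H2 x' x' (by simpa using hδ2)).1 (le_max_right _ _))
      · refine le_trans (naY (g x) (h x) (f x')) ?_
        exact max_le (le_trans (H2 x x (by simpa using hδ2)).2 (le_max_right _ _))
          (le_trans (H1 x x' hx1).2 (le_max_left _ _))
    have := sInf_le hmem
    exact absurd (lt_of_le_of_lt this (max_lt hε1 hε2)) (lt_irrefl _)
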